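/- Let 𝔤 be the 4-dimensional real Lie algebra e(2) ⊕ ℝ with basis e₁, e₂, e₃, e₄ and nonzero brackets [e₁,e₃] = e₂, [e₂,e₃] = −e₁, and let F be a nonzero 2-cocycle of 𝔤 with F(e₁,e₂) · F(e₃,e₄) = 0. Then the kernel of F, i.e. the subspace {v ∈ 𝔤 : F(v,w) = 0 for all w ∈ 𝔤}, has dimension exactly 2. -/

import Mathlib

noncomputable section

/-- The Lie bracket of the Lie algebra `e(2) ⊕ ℝ` on `ℝ⁴`, in the basis
`e₁ = e 0, e₂ = e 1, e₃ = e 2, e₄ = e 3` with nonzero brackets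
`[e₁,e₃] = e₂`, `[e₂,e₃] = -e₁`. -/
def bra (x y : Fin 4 → ℝ) : Fin 4 → ℝ :=
  ![-(x 1 * y 2 - x 2 * y 1), x 0 * y 2 - x 2 * y 0, 0, 0]

/-- The standard basis `e₁, e₂, e₃, e₄` (indexed from `0`). -/
def e (a : Fin 4) : Fin 4 → ℝ := Pi.single a 1

/-- `F` is a 2-cocycle of `e(2) ⊕ ℝ` with values in `ℝ`. -/
def IsCocycle (F : (Fin 4 → ℝ) →ₗ[ℝ] (Fin 4 → ℝ) →ₗ[ℝ] ℝ) : Prop :=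
  ∀ x y z : Fin 4 → ℝ, F (bra x y) z + F (bra y z) x + F (bra z x) y = 0

lemma skew (F : (Fin 4 → ℝ) →ₗ[ℝ] (Fin 4 → ℝ) →ₗ[ℝ] ℝ)
    (hFalt : ∀ x : Fin 4 → ℝ, F x x = 0) (x y : Fin 4 → ℝ) : F y x = - F x y := by
  have h := hFalt (x + y)
  simp [map_add, hFalt] at h
  linarith

lemma edecomp (v : Fin 4 → ℝ) : v = v 0 • e 0 + v 1 • e 1 + v 2 • e 2 + v 3 • e 3 := by
  funext i
  fin_cases i <;> simp [e, Pi.single_apply]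

lemma bra02 : bra (e 0) (e 2) = e 1 := by
  funext i; fin_cases i <;> simp [bra, e, Pi.single_apply]

lemma bra12 : bra (e 1) (e 2) = -(e 0) := by
  funext i; fin_cases i <;> simp [bra, e, Pi.single_apply]

lemma bra_zero_right (x y : Fin 4 → ℝ) (h1 : y 0 = 0) (h2 : y 1 = 0) (h3 : y 2 = 0) :
    bra x y = 0 := by
  funext i; fin_cases i <;> simp [bra, h1, h2, h3]

lemma bra_zero_left (x y : Fin 4 → ℝ) (h1 : x 0 = 0) (h2 : x 1 = 0) (h3 : x 2 = 0) :
    bra x y = 0 := by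
  funext i; fin_cases i <;> simp [bra, h1, h2, h3]

lemma key (F : (Fin 4 → ℝ) →ₗ[ℝ] (Fin 4 → ℝ) →ₗ[ℝ] ℝ)
    (hFalt : ∀ x : Fin 4 → ℝ, F x x = 0) (hF : IsCocycle F) (v w : Fin 4 → ℝ) :
    F v w = F (e 0) (e 1) * (v 0 * w 1 - v 1 * w 0)
      + F (e 0) (e 2) * (v 0 * w 2 - v 2 * w 0)
      + F (e 1) (e 2) * (v 1 * w 2 - v 2 * w 1)
      + F (e 2) (e 3) * (v 2 * w 3 - v 3 * w 2) := by
  have e3c : (e 3 : Fin 4 → ℝ) 0 = 0 ∧ (e 3 : Fin 4 → ℝ) 1 = 0 ∧ (e 3 : Fin 4 → ℝ) 2 = 0 := by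
    refine ⟨?_, ?_, ?_⟩ <;> simp [e, Pi.single_apply]
  have h13 : F (e 1) (e 3) = 0 := by
    have h := hF (e 0) (e 2) (e 3)
    rw [bra02, bra_zero_right (e 2) (e 3) e3c.1 e3c.2.1 e3c.2.2,
        bra_zero_left (e 3) (e 0) e3c.1 e3c.2.1 e3c.2.2] at h
    simpa using h
  have h03 : F (e 0) (e 3) = 0 := by
    have h := hF (e 1) (e 2) (e 3)
    rw [bra12, bra_zero_right (e 2) (e 3) e3c.1 e3c.2.1 e3c.2.2,
        bra_zero_left (e 3) (e 1) e3c.1 e3c.2.1 e3c.2.2] at h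
    simp at h
    linarith
  have hsk := skew F hFalt
  conv_lhs => rw [edecomp v, edecomp w]
  simp only [map_add, map_smul, LinearMap.add_apply, LinearMap.smul_apply, smul_eq_mul]
  rw [hsk (e 0) (e 1), hsk (e 0) (e 2), hsk (e 1) (e 2), hsk (e 2) (e 3),
      hsk (e 0) (e 3), hsk (e 1) (e 3)]
  simp only [hFalt, h03, h13]
  ring

lemma aux_rank (F : (Fin 4 → ℝ) →ₗ[ℝ] (Fin 4 → ℝ) →ₗ[ℝ] ℝ)
    (hFalt : ∀ x : Fin 4 → ℝ, F x x = 0) (w1 w2 : Fin 4 → ℝ)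
    (hs : F w1 w2 ≠ 0)
    (hker : ∀ v, F v w1 = 0 → F v w2 = 0 → F v = 0) :
    Module.finrank ℝ (LinearMap.ker F) = 2 := by
  set G : (Fin 4 → ℝ) →ₗ[ℝ] ℝ × ℝ := (F.flip w1).prod (F.flip w2) with hG
  have hkereq : LinearMap.ker F = LinearMap.ker G := by
    ext v
    simp only [LinearMap.mem_ker, hG, LinearMap.prod_apply, Function.prod, Prod.mk_eq_zero,
      LinearMap.flip_apply]
    constructor
    · intro h; simp [h]
    · rintro ⟨h1, h2⟩; exact hker v h1 h2
  have hsurj : Function.Surjective G := by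
    rintro ⟨p, q⟩
    refine ⟨(q / F w1 w2) • w1 - (p / F w1 w2) • w2, ?_⟩
    have h21 : F w2 w1 = - F w1 w2 := skew F hFalt w1 w2
    simp only [hG, LinearMap.prod_apply, Function.prod, LinearMap.flip_apply, map_sub, map_smul,
      smul_eq_mul, LinearMap.sub_apply, LinearMap.smul_apply]
    rw [hFalt w1, hFalt w2, h21]
    rw [Prod.ext_iff]
    constructor <;> simp <;> field_simp
  have h1 := LinearMap.finrank_range_add_finrank_ker G
  rw [LinearMap.range_eq_top.mpr hsurj] at h1
  simp only [finrank_top] at h1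
  rw [hkereq]
  have h2 : Module.finrank ℝ (ℝ × ℝ) = 2 := by simp
  have h3 : Module.finrank ℝ (Fin 4 → ℝ) = 4 := by simp
  omega


/-- a nonzero degenerate 2-cocycle of `e(2) ⊕ ℝ`
(`F(e₁,e₂)·F(e₃,e₄) = 0`) has a kernel of dimension exactly 2. -/
theorem degenerate_cocycle_kernel_dim_two
    (F : (Fin 4 → ℝ) →ₗ[ℝ] (Fin 4 → ℝ) →ₗ[ℝ] ℝ)
    (hFalt : ∀ x : Fin 4 → ℝ, F x x = 0) (hF : IsCocycle F)
    (hF0 : F ≠ 0) (hdeg : F (e 0) (e 1) * F (e 2) (e 3) = 0) :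
    Module.finrank ℝ (LinearMap.ker F) = 2 := by
  set a := F (e 0) (e 1) with ha
  set b := F (e 0) (e 2) with hb
  set c := F (e 1) (e 2) with hc
  set d := F (e 2) (e 3) with hd
  have hkey := key F hFalt hF
  have he : ∀ i j : Fin 4, e i j = if i = j then 1 else 0 := by
    intro i j; simp [e, Pi.single_apply, eq_comm]
  have hFval : ∀ v : Fin 4 → ℝ,
      F v (e 0) = -(a * v 1) - b * v 2 ∧
      F v (e 1) = a * v 0 - c * v 2 ∧
      F v (e 2) = b * v 0 + c * v 1 - d * v 3 ∧
      F v (e 3) = d * v 2 := by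
    intro v
    refine ⟨?_, ?_, ?_, ?_⟩ <;> (rw [hkey]; simp [he, ← ha, ← hb, ← hc, ← hd]; try ring)
  have hnz : ¬ (a = 0 ∧ b = 0 ∧ c = 0 ∧ d = 0) := by
    rintro ⟨h1, h2, h3, h4⟩
    apply hF0
    refine LinearMap.ext fun v => LinearMap.ext fun w => ?_
    rw [hkey v w, ← ha, ← hb, ← hc, ← hd, h1, h2, h3, h4]
    simp
  have hEzero : ∀ v : Fin 4 → ℝ, (∀ j, F v (e j) = 0) → F v = 0 := by
    intro v h
    refine LinearMap.ext fun w => ?_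
    conv_lhs => rw [edecomp w]
    simp [map_add, map_smul, h]
  by_cases hDne : d = 0
  · by_cases hAne : a = 0
    · by_cases hBne : b = 0
      · have hCne : c ≠ 0 := by tauto
        apply aux_rank F hFalt (e 1) (e 2) (by rw [← hc]; exact hCne)
        intro v h1 h2
        obtain ⟨k0, k1, k2, k3⟩ := hFval v
        have hv2 : v 2 = 0 := by
          rw [k1, hAne] at h1; simp at h1; tauto
        apply hEzero
        intro j
        fin_cases j
        · show F v (e 0) = 0; rw [k0, hAne, hBne]; ring
        · exact h1
        · exact h2
        · show F v (e 3) = 0; rw [k3, hDne]; ring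
      · apply aux_rank F hFalt (e 0) (e 2) (by rw [← hb]; exact hBne)
        intro v h1 h2
        obtain ⟨k0, k1, k2, k3⟩ := hFval v
        have hv2 : v 2 = 0 := by
          rw [k0, hAne] at h1; simp at h1; tauto
        apply hEzero
        intro j
        fin_cases j
        · exact h1
        · show F v (e 1) = 0; rw [k1, hAne, hv2]; ring
        · exact h2
        · show F v (e 3) = 0; rw [k3, hv2]; ring
    · apply aux_rank F hFalt (e 0) (e 1) (by rw [← ha]; exact hAne)
      intro v h1 h2
      obtain ⟨k0, k1, k2, k3⟩ := hFval v
      rw [k0] at h1; rw [k1] at h2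
      apply hEzero
      intro j
      fin_cases j
      · show F v (e 0) = 0; rw [k0]; linarith
      · show F v (e 1) = 0; rw [k1]; linarith
      · show F v (e 2) = 0; rw [k2, hDne]
        have key2 : a * (b * v 0 + c * v 1) = 0 := by linear_combination b * h2 - c * h1
        have := (mul_eq_zero.mp key2).resolve_left hAne
        linarith
      · show F v (e 3) = 0; rw [k3, hDne]; ring
  · have hAeq : a = 0 := by
      rcases mul_eq_zero.mp hdeg with h | h
      · exact h
      · exact absurd h hDne
    apply aux_rank F hFalt (e 2) (e 3) (by rw [← hd]; exact hDne)
    intro v h1 h2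
    obtain ⟨k0, k1, k2, k3⟩ := hFval v
    have hv2 : v 2 = 0 := by
      rw [k3] at h2
      exact (mul_eq_zero.mp h2).resolve_left hDne
    apply hEzero
    intro j
    fin_cases j
    · show F v (e 0) = 0; rw [k0, hAeq, hv2]; ring
    · show F v (e 1) = 0; rw [k1, hAeq, hv2]; ring
    · exact h1
    · exact h2
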